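/- Let k be a perfect field of characteristic p > 0, (H, ω) a finite-dimensional symplectic k-vector space, I ⊆ H an isotropic subspace, and φ a symplectic zip on H compatible with I, with induced Frobenius-semilinear map φ' on H' = I^⊥/I. Then the image of φ' is a Lagrangian subspace of (H', ω'); in particular φ' is a symplectic zip on (H', ω'). -/

import Mathlib

/-!
STATEMENT 10: Let `k` be a perfect field of characteristic `p > 0`, `(H, ω)` a
finite-dimensional symplectic `k`-vector space, `I ⊆ H` an isotropic subspace, and `φ` a
symplectic zip on `H` compatible with `I`, with induced Frobenius-semilinear map `φ'` on
`H' = I^⊥ / I`. Then the image of `φ'` is a Lagrangian subspace of `(H', ω')`; in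
particular `φ'` is a symplectic zip on `(H', ω')` (Frobenius-semilinear with Lagrangian
kernel and image).
-/

/-- The orthogonal complement `F^⊥ = {x ∈ H : ω x y = 0 for all y ∈ F}`. -/
def perp {k H : Type*} [Field k] [AddCommGroup H] [Module k H]
    (ω : H →ₗ[k] H →ₗ[k] k) (F : Submodule k H) : Submodule k H where
  carrier := {x | ∀ y ∈ F, ω x y = 0}
  add_mem' := by
    intro a b ha hb y hy
    simp only [map_add, LinearMap.add_apply, ha y hy, hb y hy, add_zero]
  zero_mem' := by
    intro y hy
    simp
  smul_mem' := by
    intro c x hx y hy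
    simp only [map_smul, LinearMap.smul_apply, hx y hy, smul_zero]

/-- A subspace is Lagrangian if it equals its own orthogonal complement. -/
def IsLagrangian {k H : Type*} [Field k] [AddCommGroup H] [Module k H]
    (ω : H →ₗ[k] H →ₗ[k] k) (F : Submodule k H) : Prop :=
  perp ω F = F

/-- Over a perfect field the Frobenius is surjective, so ranges of Frobenius-semilinear
maps are submodules. -/
instance frobeniusSurjective (k : Type*) [Field k] (p : ℕ) [Fact p.Prime] [CharP k p]
    [PerfectRing k p] : RingHomSurjective (frobenius k p) :=
  ⟨surjective_frobenius k p⟩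

section Aux

variable {k H : Type*} [Field k] [AddCommGroup H] [Module k H]

theorem mem_perp (ω : H →ₗ[k] H →ₗ[k] k) (F : Submodule k H) (x : H) :
    x ∈ perp ω F ↔ ∀ y ∈ F, ω x y = 0 := Iff.rfl

theorem perp_antitone (ω : H →ₗ[k] H →ₗ[k] k) {F G : Submodule k H} (h : F ≤ G) :
    perp ω G ≤ perp ω F := fun x hx y hy => hx y (h hy)

theorem omega_skew (ω : H →ₗ[k] H →ₗ[k] k) (halt : ∀ x, ω x x = 0) (x y : H) :
    ω x y = -ω y x := by
  have h := halt (x + y)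
  simp only [map_add, LinearMap.add_apply, halt x, halt y, zero_add, add_zero] at h
  exact eq_neg_of_add_eq_zero_right h

theorem omega_surj [FiniteDimensional k H] (ω : H →ₗ[k] H →ₗ[k] k)
    (hnd : ∀ x, (∀ y, ω x y = 0) → x = 0) (f : H →ₗ[k] k) : ∃ w, ω w = f := by
  have hinj : Function.Injective ω := by
    intro a b hab
    have h0 : a - b = 0 := hnd _ fun y => by
      rw [map_sub, LinearMap.sub_apply, LinearMap.congr_fun hab y, sub_self]
    exact sub_eq_zero.mp h0
  have hsurj : Function.Surjective ω :=
    (LinearMap.injective_iff_surjective_of_finrank_eq_finrank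
      (Subspace.dual_finrank_eq (K := k) (V := H)).symm).mp hinj
  exact hsurj f

theorem perp_perp_le [FiniteDimensional k H] (ω : H →ₗ[k] H →ₗ[k] k)
    (halt : ∀ x, ω x x = 0) (hnd : ∀ x, (∀ y, ω x y = 0) → x = 0) (F : Submodule k H) :
    perp ω (perp ω F) ≤ F := by
  intro x hx
  by_contra hxF
  have hmkne : (Submodule.Quotient.mk x : H ⧸ F) ≠ 0 := by
    simpa [Submodule.Quotient.mk_eq_zero] using hxF
  obtain ⟨f, hf⟩ : ∃ f : Module.Dual k (H ⧸ F), f (Submodule.Quotient.mk x) ≠ 0 := by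
    by_contra h
    push_neg at h
    exact hmkne ((Module.forall_dual_apply_eq_zero_iff k _).mp h)
  obtain ⟨w, hw⟩ := omega_surj ω hnd (f ∘ₗ F.mkQ)
  have hwperp : w ∈ perp ω F := by
    intro y hy
    have h1 : (f ∘ₗ F.mkQ) y = 0 := by
      simp [Submodule.mkQ_apply, (Submodule.Quotient.mk_eq_zero F).mpr hy]
    exact (LinearMap.congr_fun hw y).trans h1
  have h1 : ω x w = 0 := hx w hwperp
  have h2 : ω w x = 0 := by rw [omega_skew ω halt, h1, neg_zero]
  exact hf ((LinearMap.congr_fun hw x).symm.trans h2)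

end Aux

theorem zip_induced_image_lagrangian
    {k : Type*} [Field k] (p : ℕ) [Fact p.Prime] [CharP k p] [PerfectRing k p]
    {H : Type*} [AddCommGroup H] [Module k H] [FiniteDimensional k H]
    (ω : H →ₗ[k] H →ₗ[k] k)
    (halt : ∀ x, ω x x = 0)
    (hnd : ∀ x, (∀ y, ω x y = 0) → x = 0)
    (I : Submodule k H) (hiso : I ≤ perp ω I)
    (φ : H →ₛₗ[frobenius k p] H)
    (hker : IsLagrangian ω (LinearMap.ker φ))
    (hrange : IsLagrangian ω (LinearMap.range φ))
    -- compatibility with `I`: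
    (hφI : ∀ x ∈ I, φ x = 0)
    (hφP : ∀ x ∈ perp ω I, φ x ∈ perp ω I)
    (hφinj : ∀ x : H, φ x ∈ perp ω I → x ∈ perp ω I)
    (hφsurj : ∀ y : H, ∃ x : H, y - φ x ∈ perp ω I)
    -- the induced form `ω'` on `H' = I^⊥ / I`:
    (ω' : (perp ω I ⧸ I.comap (perp ω I).subtype) →ₗ[k]
        (perp ω I ⧸ I.comap (perp ω I).subtype) →ₗ[k] k)
    (hω' : ∀ x y : perp ω I,
        ω' (Submodule.Quotient.mk x) (Submodule.Quotient.mk y) = ω (x : H) (y : H))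
    -- the induced map `φ'` on `H' = I^⊥ / I`:
    (φ' : (perp ω I ⧸ I.comap (perp ω I).subtype) →
        (perp ω I ⧸ I.comap (perp ω I).subtype))
    (hφ' : ∀ (x : perp ω I) (hx : φ (x : H) ∈ perp ω I),
        φ' (Submodule.Quotient.mk x) =
          Submodule.Quotient.mk (⟨φ (x : H), hx⟩ : perp ω I)) :
    -- the image of `φ'` is a Lagrangian subspace of `(H', ω')` …
    (∃ R' : Submodule k (perp ω I ⧸ I.comap (perp ω I).subtype),
        (R' : Set (perp ω I ⧸ I.comap (perp ω I).subtype)) = Set.range φ' ∧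
        IsLagrangian ω' R') ∧
    -- … and in particular `φ'` is a symplectic zip on `(H', ω')`:
    (∀ z w, φ' (z + w) = φ' z + φ' w) ∧
    (∀ (a : k) z, φ' (a • z) = a ^ p • φ' z) ∧
    (∃ K' : Submodule k (perp ω I ⧸ I.comap (perp ω I).subtype),
        (K' : Set (perp ω I ⧸ I.comap (perp ω I).subtype)) = {z | φ' z = 0} ∧
        IsLagrangian ω' K') := by
  classical
  choose c hc using hφsurj
  have hskew := omega_skew ω halt
  have hQsurj : Function.Surjective
      (Submodule.Quotient.mk (p := I.comap (perp ω I).subtype)) :=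
    Submodule.Quotient.mk_surjective _
  have key : ∀ x : perp ω I,
      φ' (Submodule.Quotient.mk x) =
        Submodule.Quotient.mk (⟨φ (x : H), hφP _ x.2⟩ : perp ω I) :=
    fun x => hφ' x (hφP _ x.2)
  have hfrobsurj : ∀ a : k, ∃ b : k, b ^ p = a := by
    intro a
    obtain ⟨b, hb⟩ := surjective_frobenius k p a
    exact ⟨b, by rwa [frobenius_def] at hb⟩
  -- additivity
  have hadd : ∀ z w, φ' (z + w) = φ' z + φ' w := by
    intro z w
    obtain ⟨x, rfl⟩ := hQsurj z
    obtain ⟨y, rfl⟩ := hQsurj w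
    rw [← Submodule.Quotient.mk_add, key, key, key, ← Submodule.Quotient.mk_add]
    congr 1
    apply Subtype.ext
    simp [map_add]
  -- semilinearity
  have hsmul : ∀ (a : k) z, φ' (a • z) = a ^ p • φ' z := by
    intro a z
    obtain ⟨x, rfl⟩ := hQsurj z
    rw [← Submodule.Quotient.mk_smul, key, key, ← Submodule.Quotient.mk_smul]
    congr 1
    apply Subtype.ext
    simp [map_smulₛₗ, frobenius_def]
  have hzero : φ' 0 = 0 := by
    have h0 := key 0
    rw [Submodule.Quotient.mk_zero] at h0
    rw [h0, Submodule.Quotient.mk_eq_zero]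
    show φ ((0 : perp ω I) : H) ∈ I
    simp
  -- the image and kernel submodules
  let R' : Submodule k (perp ω I ⧸ I.comap (perp ω I).subtype) :=
    { carrier := Set.range φ'
      add_mem' := by
        intro a b ha hb
        obtain ⟨u, rfl⟩ := ha
        obtain ⟨v, rfl⟩ := hb
        exact ⟨u + v, hadd u v⟩
      zero_mem' := ⟨0, hzero⟩
      smul_mem' := by
        intro a z hz
        obtain ⟨u, rfl⟩ := hz
        obtain ⟨b, rfl⟩ := hfrobsurj a
        exact ⟨b • u, hsmul b u⟩ }
  let K' : Submodule k (perp ω I ⧸ I.comap (perp ω I).subtype) :=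
    { carrier := {z | φ' z = 0}
      add_mem' := by
        intro a b ha hb
        simp only [Set.mem_setOf_eq] at *
        rw [hadd, ha, hb, add_zero]
      zero_mem' := hzero
      smul_mem' := by
        intro a z hz
        simp only [Set.mem_setOf_eq] at *
        rw [hsmul, hz, smul_zero] }
  -- every element of the range of φ is killed by φ-composition pairings
  have hφperpRange : ∀ u v : H, ω (φ u) (φ v) = 0 := by
    intro u v
    have h3 : φ u ∈ perp ω (LinearMap.range φ) := by rw [hrange]; exact ⟨u, rfl⟩
    exact h3 _ ⟨v, rfl⟩
  -- φ u ∈ I forces φ u = 0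
  have hIrange : ∀ u : H, φ u ∈ I → φ u = 0 := by
    intro u hu
    apply hnd
    intro z0
    have h1 : ω (φ u) (z0 - φ (c z0)) = 0 := by
      rw [hskew, hc z0 _ hu, neg_zero]
    calc ω (φ u) z0 = ω (φ u) ((z0 - φ (c z0)) + φ (c z0)) := by
          rw [sub_add_cancel]
      _ = ω (φ u) (z0 - φ (c z0)) + ω (φ u) (φ (c z0)) := map_add _ _ _
      _ = 0 := by rw [h1, hφperpRange, add_zero]
  have hkerP : LinearMap.ker φ ≤ perp ω I := by
    have h1 : I ≤ LinearMap.ker φ := fun x hx => LinearMap.mem_ker.mpr (hφI x hx)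
    calc LinearMap.ker φ = perp ω (LinearMap.ker φ) := hker.symm
      _ ≤ perp ω I := perp_antitone ω h1
  have K'char : ∀ x : perp ω I,
      φ' (Submodule.Quotient.mk x) = 0 ↔ φ (x : H) = 0 := by
    intro x
    rw [key, Submodule.Quotient.mk_eq_zero]
    constructor
    · intro h
      exact hIrange _ h
    · intro h
      show φ (x : H) ∈ I
      rw [h]; exact I.zero_mem
  -- R' is Lagrangian
  have hRlag : IsLagrangian ω' R' := by
    apply le_antisymm
    · -- perp ω' R' ≤ R'
      intro z hz
      obtain ⟨y, rfl⟩ := hQsurj z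
      have hy : ∀ x : perp ω I, ω (y : H) (φ (x : H)) = 0 := by
        intro x
        have h1 : φ' (Submodule.Quotient.mk x) ∈ R' := ⟨_, rfl⟩
        have h2 := hz _ h1
        rw [key, hω'] at h2
        exact h2
      have welldef : ∀ u v : H, u - φ v ∈ perp ω I →
          ω (y : H) (φ (c u)) = ω (y : H) (φ v) := by
        intro u v huv
        have h1 : φ (c u) - φ v ∈ perp ω I := by
          have e : (u - φ v) - (u - φ (c u)) = φ (c u) - φ v := by abel
          rw [← e]
          exact Submodule.sub_mem _ huv (hc u)
        have h2 : c u - v ∈ perp ω I := hφinj _ (by rwa [map_sub])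
        have h3 : ω (y : H) (φ (c u - v)) = 0 := hy ⟨c u - v, h2⟩
        rw [map_sub, map_sub] at h3
        exact sub_eq_zero.mp h3
      have gadd : ∀ u v : H,
          ω (y : H) (φ (c (u + v))) = ω (y : H) (φ (c u)) + ω (y : H) (φ (c v)) := by
        intro u v
        have hm : (u + v) - φ (c u + c v) ∈ perp ω I := by
          have e : (u + v) - (φ (c u) + φ (c v)) = (u - φ (c u)) + (v - φ (c v)) := by
            abel
          rw [map_add, e]
          exact Submodule.add_mem _ (hc u) (hc v)
        have h1 := welldef (u + v) (c u + c v) hm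
        rw [map_add, map_add] at h1
        exact h1
      have gsmul : ∀ (a : k) (u : H),
          ω (y : H) (φ (c (a • u))) = a * ω (y : H) (φ (c u)) := by
        intro a u
        obtain ⟨b, rfl⟩ := hfrobsurj a
        have hm : (b ^ p) • u - φ (b • c u) ∈ perp ω I := by
          rw [map_smulₛₗ, frobenius_def, ← smul_sub]
          exact Submodule.smul_mem _ _ (hc u)
        have h1 := welldef _ _ hm
        rw [map_smulₛₗ, frobenius_def, map_smul, smul_eq_mul] at h1
        exact h1
      let glin : H →ₗ[k] k :=
        { toFun := fun u => ω (y : H) (φ (c u))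
          map_add' := gadd
          map_smul' := by intro a u; simpa using gsmul a u }
      obtain ⟨i, hi⟩ := omega_surj ω hnd glin
      have hiI : i ∈ I := by
        apply perp_perp_le ω halt hnd I
        intro q hq
        have h1 : ω i q = ω (y : H) (φ (c q)) := LinearMap.congr_fun hi q
        have h2 : ω (y : H) (φ (c q)) = ω (y : H) (φ 0) := welldef q 0 (by simpa using hq)
        rw [h1, h2, map_zero, map_zero]
      have hyiperp : (y : H) - i ∈ perp ω (LinearMap.range φ) := by
        rintro w ⟨v, rfl⟩
        have e1 : ω ((y : H) - i) (φ v) = ω (y : H) (φ v) - ω i (φ v) := by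
          rw [map_sub, LinearMap.sub_apply]
        have e2 : ω i (φ v) = ω (y : H) (φ (c (φ v))) := LinearMap.congr_fun hi (φ v)
        have e3 : ω (y : H) (φ (c (φ v))) = ω (y : H) (φ v) := welldef (φ v) v (by simp)
        rw [e1, e2, e3, sub_self]
      rw [hrange] at hyiperp
      obtain ⟨u, hu⟩ := hyiperp
      have huP : u ∈ perp ω I :=
        hφinj u (by rw [hu]; exact Submodule.sub_mem _ y.2 (hiso hiI))
      refine ⟨Submodule.Quotient.mk (⟨u, huP⟩ : perp ω I), ?_⟩
      rw [key, Submodule.Quotient.eq]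
      show ((⟨φ u, hφP _ huP⟩ - y : perp ω I) : H) ∈ I
      rw [AddSubgroupClass.coe_sub]
      show φ u - (y : H) ∈ I
      rw [hu]
      simpa [sub_sub_cancel_left] using I.neg_mem hiI
    · -- R' ≤ perp ω' R'
      intro z hz
      obtain ⟨u, rfl⟩ := hz
      obtain ⟨u0, rfl⟩ := hQsurj u
      rw [mem_perp]
      intro v hv
      obtain ⟨v1, hv1⟩ := hv
      obtain ⟨v0, rfl⟩ := hQsurj v1
      rw [← hv1, key, key, hω']
      exact hφperpRange _ _
  -- K' is Lagrangian
  have hKlag : IsLagrangian ω' K' := by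
    apply le_antisymm
    · intro z hz
      obtain ⟨y, rfl⟩ := hQsurj z
      have hyker : (y : H) ∈ perp ω (LinearMap.ker φ) := by
        intro w hw
        have hwP : w ∈ perp ω I := hkerP hw
        have hmem : Submodule.Quotient.mk (⟨w, hwP⟩ : perp ω I) ∈ K' :=
          (K'char _).mpr (LinearMap.mem_ker.mp hw)
        have h2 := hz _ hmem
        rwa [hω'] at h2
      rw [hker] at hyker
      show φ' (Submodule.Quotient.mk y) = 0
      exact (K'char y).mpr (LinearMap.mem_ker.mp hyker)
    · intro z hz
      obtain ⟨x, rfl⟩ := hQsurj z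
      have hx : φ (x : H) = 0 := (K'char x).mp hz
      rw [mem_perp]
      intro v hv
      obtain ⟨x', rfl⟩ := hQsurj v
      have hx' : φ ((x' : perp ω I) : H) = 0 := (K'char x').mp hv
      rw [hω']
      have h1 : (x : H) ∈ perp ω (LinearMap.ker φ) := by
        rw [hker]; exact LinearMap.mem_ker.mpr hx
      exact h1 _ (LinearMap.mem_ker.mpr hx')
  exact ⟨⟨R', rfl, hRlag⟩, hadd, hsmul, ⟨K', rfl, hKlag⟩⟩
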